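/- arXiv:2106.10785 — 3 statements merged into one kernel-verified Lean document; each statement's English description precedes it below -/
import Mathlib

section
/- Let B ∈ ℝ^{N×N} have nonnegative entries and let a, b > 0. Then the set function h(S) = (1/(a+b)) Σ_{j=1}^N (min(Σ_{i∈S} B_{ji}, a) + b) is monotone nondecreasing and submodular. -/
lemma min_diff_le (a c s t : ℝ) (hc : 0 ≤ c) (hst : s ≤ t) :
    min (t + c) a - min t a ≤ min (s + c) a - min s a := by
  simp only [min_def]; split_ifs <;> linarith

/-- For nonnegative B and a, b > 0, the set function
h(S) = (1/(a+b)) Σ_j (min(Σ_{i∈S} B j i, a) + b) is monotone nondecreasing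
and submodular. -/
theorem stmt_5 (N : ℕ) (B : Matrix (Fin N) (Fin N) ℝ)
    (hB : ∀ j i, 0 ≤ B j i) (a b : ℝ) (ha : 0 < a) (hb : 0 < b) :
    (∀ S T : Finset (Fin N), S ⊆ T →
      (1 / (a + b)) * ∑ j, (min (∑ i ∈ S, B j i) a + b)
        ≤ (1 / (a + b)) * ∑ j, (min (∑ i ∈ T, B j i) a + b)) ∧
    (∀ S T : Finset (Fin N), S ⊆ T → ∀ x ∉ T,
      (1 / (a + b)) * ∑ j, (min (∑ i ∈ insert x T, B j i) a + b)
          - (1 / (a + b)) * ∑ j, (min (∑ i ∈ T, B j i) a + b)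
        ≤ (1 / (a + b)) * ∑ j, (min (∑ i ∈ insert x S, B j i) a + b)
          - (1 / (a + b)) * ∑ j, (min (∑ i ∈ S, B j i) a + b)) := by
  have hab : 0 ≤ 1 / (a + b) := by positivity
  constructor
  · intro S T hST
    apply mul_le_mul_of_nonneg_left _ hab
    apply Finset.sum_le_sum
    intro j _
    have : (∑ i ∈ S, B j i) ≤ ∑ i ∈ T, B j i :=
      Finset.sum_le_sum_of_subset_of_nonneg hST (fun i _ _ => hB j i)
    have := min_le_min this (le_refl a)
    linarith
  · intro S T hST x hxT
    have hxS : x ∉ S := fun h => hxT (hST h)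
    rw [← mul_sub, ← mul_sub, ← Finset.sum_sub_distrib, ← Finset.sum_sub_distrib]
    apply mul_le_mul_of_nonneg_left _ hab
    apply Finset.sum_le_sum
    intro j _
    rw [Finset.sum_insert hxT, Finset.sum_insert hxS]
    have hsum : (∑ i ∈ S, B j i) ≤ ∑ i ∈ T, B j i :=
      Finset.sum_le_sum_of_subset_of_nonneg hST (fun i _ _ => hB j i)
    have := min_diff_le a (B j x) _ _ (hB j x) hsum
    simp only [add_comm (B j x)] at *
    linarith
end

section
/- Let B ∈ ℝ^{N×N} have nonnegative entries and σ > 0. Then the set function h(S) = (1/2) Σ_{j=1}^N (1 + erf((Σ_{i∈S} B_{ji})/(σ√2))) is monotone nondecreasing and submodular. -/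
open Real

/-- The Gauss error function erf(x) = (2/√π) ∫_0^x e^{−t²} dt. -/
noncomputable def erf (x : ℝ) : ℝ :=
  (2 / Real.sqrt π) * ∫ t in (0 : ℝ)..x, Real.exp (-t ^ 2)

private lemma contE : Continuous fun t : ℝ => Real.exp (-t ^ 2) :=
  Real.continuous_exp.comp (continuous_neg.comp (continuous_pow 2))

private lemma intE (a b : ℝ) :
    IntervalIntegrable (fun t : ℝ => Real.exp (-t ^ 2)) MeasureTheory.volume a b :=
  contE.intervalIntegrable a b

private lemma erf_sub (a b : ℝ) :
    erf b - erf a = (2 / Real.sqrt π) * ∫ t in a..b, Real.exp (-t ^ 2) := by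
  rw [erf, erf, ← mul_sub, intervalIntegral.integral_interval_sub_left (intE 0 b) (intE 0 a)]

private lemma erf_mono {a b : ℝ} (h : a ≤ b) : erf a ≤ erf b := by
  have h1 : 0 ≤ erf b - erf a := by
    rw [erf_sub]
    apply mul_nonneg (by positivity)
    apply intervalIntegral.integral_nonneg h
    intro t _; positivity
  linarith

private lemma erf_concave_diff {s t c : ℝ} (hs : 0 ≤ s) (hst : s ≤ t) (hc : 0 ≤ c) :
    erf (t + c) - erf t ≤ erf (s + c) - erf s := by
  rw [erf_sub, erf_sub]
  apply mul_le_mul_of_nonneg_left _ (by positivity)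
  have key : (∫ u in t..(t + c), Real.exp (-u ^ 2))
      = ∫ u in s..(s + c), Real.exp (-(u + (t - s)) ^ 2) := by
    rw [intervalIntegral.integral_comp_add_right (fun u => Real.exp (-u ^ 2)) (t - s)]
    congr 1 <;> ring
  rw [key]
  apply intervalIntegral.integral_mono_on (by linarith)
    ((contE.comp (continuous_add_right _)).intervalIntegrable _ _) (intE s (s + c))
  intro u hu
  have hu0 : 0 ≤ u := le_trans hs hu.1
  have h2 : u ^ 2 ≤ (u + (t - s)) ^ 2 := by nlinarith
  show Real.exp (-(u + (t - s)) ^ 2) ≤ Real.exp (-u ^ 2)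
  exact Real.exp_le_exp.2 (by linarith)

/-- For nonnegative B and σ > 0, the set function
h(S) = (1/2) Σ_j (1 + erf((Σ_{i∈S} B j i)/(σ√2))) is monotone nondecreasing
and submodular. -/
theorem stmt_6 (N : ℕ) (B : Matrix (Fin N) (Fin N) ℝ)
    (hB : ∀ j i, 0 ≤ B j i) (σ : ℝ) (hσ : 0 < σ) :
    (∀ S T : Finset (Fin N), S ⊆ T →
      (1 / 2) * ∑ j, (1 + erf ((∑ i ∈ S, B j i) / (σ * Real.sqrt 2)))
        ≤ (1 / 2) * ∑ j, (1 + erf ((∑ i ∈ T, B j i) / (σ * Real.sqrt 2)))) ∧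
    (∀ S T : Finset (Fin N), S ⊆ T → ∀ x ∉ T,
      (1 / 2) * ∑ j, (1 + erf ((∑ i ∈ insert x T, B j i) / (σ * Real.sqrt 2)))
          - (1 / 2) * ∑ j, (1 + erf ((∑ i ∈ T, B j i) / (σ * Real.sqrt 2)))
        ≤ (1 / 2) * ∑ j, (1 + erf ((∑ i ∈ insert x S, B j i) / (σ * Real.sqrt 2)))
          - (1 / 2) * ∑ j, (1 + erf ((∑ i ∈ S, B j i) / (σ * Real.sqrt 2)))) := by
  have hσ2 : 0 < σ * Real.sqrt 2 := by positivity
  have hsum : ∀ (j : Fin N) (S T : Finset (Fin N)), S ⊆ T →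
      (∑ i ∈ S, B j i) ≤ ∑ i ∈ T, B j i := fun j S T h =>
    Finset.sum_le_sum_of_subset_of_nonneg h (fun i _ _ => hB j i)
  constructor
  · intro S T hST
    apply mul_le_mul_of_nonneg_left _ (by norm_num)
    apply Finset.sum_le_sum
    intro j _
    have := erf_mono ((div_le_div_iff_of_pos_right hσ2).mpr (hsum j S T hST))
    linarith
  · intro S T hST x hx
    rw [← mul_sub, ← mul_sub, ← Finset.sum_sub_distrib, ← Finset.sum_sub_distrib]
    apply mul_le_mul_of_nonneg_left _ (by norm_num)
    apply Finset.sum_le_sum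
    intro j _
    have hxS : x ∉ S := fun h => hx (hST h)
    rw [Finset.sum_insert hx, Finset.sum_insert hxS]
    set s := (∑ i ∈ S, B j i)
    set t := (∑ i ∈ T, B j i)
    have hs : 0 ≤ s := Finset.sum_nonneg fun i _ => hB j i
    have hst : s ≤ t := hsum j S T hST
    have hc : 0 ≤ B j x := hB j x
    have key := erf_concave_diff (s := s / (σ * Real.sqrt 2)) (t := t / (σ * Real.sqrt 2))
      (c := B j x / (σ * Real.sqrt 2)) (by positivity)
      ((div_le_div_iff_of_pos_right hσ2).mpr hst) (by positivity)
    rw [← add_div, ← add_div] at key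
    have e1 : B j x + t = t + B j x := by ring
    have e2 : B j x + s = s + B j x := by ring
    rw [e1, e2]
    linarith
end

section
/- Let h be a monotone nondecreasing submodular set function on subsets of a finite set V with h(∅) = 0, and let S_r be the set produced by the greedy algorithm that iteratively adds the element with largest marginal gain for r steps. Then h(S_r) ≥ (1 − (1 − 1/r)^r) · max_{|T| ≤ r} h(T) ≥ (1 − 1/e) · max_{|T| ≤ r} h(T). -/
/-- Nemhauser–Wolsey–Fisher greedy guarantee. If h is monotone
nondecreasing, submodular, with h(∅) = 0, and S_k is the greedy sequence
(S_0 = ∅, S_{k+1} adds an element of largest marginal gain), then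
h(S_r) ≥ (1 − (1 − 1/r)^r) · max_{|T| ≤ r} h T ≥ (1 − 1/e) · max_{|T| ≤ r} h T. -/
theorem stmt_13 {V : Type*} [Fintype V] [DecidableEq V]
    (h : Finset V → ℝ)
    (hmono : ∀ S T : Finset V, S ⊆ T → h S ≤ h T)
    (hsub : ∀ S T : Finset V, S ⊆ T → ∀ x ∉ T,
      h (insert x T) - h T ≤ h (insert x S) - h S)
    (hempty : h ∅ = 0)
    (r : ℕ) (hr : 1 ≤ r) (hcard : r ≤ Fintype.card V)
    (S : ℕ → Finset V) (hS0 : S 0 = ∅)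
    (hgreedy : ∀ k < r, ∃ x ∉ S k, S (k + 1) = insert x (S k) ∧
      ∀ y ∉ S k, h (insert y (S k)) ≤ h (insert x (S k))) :
    ∀ T : Finset V, T.card ≤ r →
      (1 - (1 - 1 / (r : ℝ)) ^ r) * h T ≤ h (S r) ∧
      (1 - 1 / Real.exp 1) * h T ≤ h (S r) := by
  intro T hT
  have hrpos : (0:ℝ) < r := by exact_mod_cast hr.trans_lt' Nat.zero_lt_one
  have hr1 : (1:ℝ) ≤ r := by exact_mod_cast hr
  have hinv : (0:ℝ) ≤ 1 - 1 / r := by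
    have : 1 / (r:ℝ) ≤ 1 := by
      rw [div_le_one hrpos]; exact hr1
    linarith
  have hT0 : 0 ≤ h T := by
    have := hmono ∅ T (Finset.empty_subset T); rw [hempty] at this; exact this
  -- telescoping lemma
  have tel : ∀ (A B : Finset V), h (B ∪ A) - h B ≤ ∑ x ∈ A, (h (insert x B) - h B) := by
    intro A B
    induction A using Finset.induction_on with
    | empty => simp
    | @insert a A ha ih =>
      rw [Finset.sum_insert ha]
      have hBA : B ∪ insert a A = insert a (B ∪ A) := by
        simp [Finset.union_insert]
      by_cases haB : a ∈ B ∪ A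
      · have : insert a (B ∪ A) = B ∪ A := Finset.insert_eq_self.mpr haB
        rw [hBA, this]
        have hnn : 0 ≤ h (insert a B) - h B := by
          have := hmono B (insert a B) (Finset.subset_insert _ _); linarith
        linarith
      · have key := hsub B (B ∪ A) Finset.subset_union_left a haB
        rw [hBA]
        linarith
  -- main induction
  have main : ∀ k, k ≤ r → h T - h (S k) ≤ (1 - 1/(r:ℝ))^k * h T := by
    intro k hk
    induction k with
    | zero => simp [hS0, hempty]
    | succ k ih =>
      have hk' : k < r := hk
      obtain ⟨x, hx, hSk1, hmax⟩ := hgreedy k hk'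
      set g := h (S (k+1)) - h (S k) with hg
      have hg0 : 0 ≤ g := by
        rw [hg, hSk1]
        have := hmono (S k) (insert x (S k)) (Finset.subset_insert _ _); linarith
      have hbound : ∀ y : V, h (insert y (S k)) - h (S k) ≤ g := by
        intro y
        by_cases hy : y ∈ S k
        · rw [Finset.insert_eq_self.mpr hy]; linarith
        · have := hmax y hy; rw [hg, hSk1]; linarith
      have h1 : h T - h (S k) ≤ r * g := by
        have htel := tel T (S k)
        have hsum : ∑ x ∈ T, (h (insert x (S k)) - h (S k)) ≤ (T.card : ℝ) * g :=
          le_trans (Finset.sum_le_sum fun y _ => hbound y) (by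
            rw [Finset.sum_const, nsmul_eq_mul])
        have hmonoT : h T ≤ h (S k ∪ T) := hmono T _ Finset.subset_union_right
        have hcardle : (T.card : ℝ) * g ≤ r * g := by
          apply mul_le_mul_of_nonneg_right _ hg0
          exact_mod_cast hT
        linarith
      have step : h T - h (S (k+1)) ≤ (1 - 1/(r:ℝ)) * (h T - h (S k)) := by
        have h2 : (1/(r:ℝ)) * (h T - h (S k)) ≤ (1/(r:ℝ)) * (r * g) :=
          mul_le_mul_of_nonneg_left h1 (by positivity)
        have h3 : (1/(r:ℝ)) * (r * g) = g := by
          field_simp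
        have : h T - h (S (k+1)) = (h T - h (S k)) - g := by rw [hg]; ring
        rw [this]; nlinarith [h2, h3]
      have ih' := ih (le_of_lt hk')
      calc h T - h (S (k+1)) ≤ (1 - 1/(r:ℝ)) * (h T - h (S k)) := step
        _ ≤ (1 - 1/(r:ℝ)) * ((1 - 1/(r:ℝ))^k * h T) :=
            mul_le_mul_of_nonneg_left ih' hinv
        _ = (1 - 1/(r:ℝ))^(k+1) * h T := by ring
  have hfin := main r le_rfl
  constructor
  · nlinarith [hfin]
  · have hexp : (1 - 1/(r:ℝ))^r ≤ 1 / Real.exp 1 := by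
      have h1 : 1 - 1/(r:ℝ) ≤ Real.exp (-(1/(r:ℝ))) := by
        have := Real.add_one_le_exp (-(1/(r:ℝ))); linarith
      have h2 : (1 - 1/(r:ℝ))^r ≤ (Real.exp (-(1/(r:ℝ))))^r :=
        pow_le_pow_left₀ hinv h1 r
      have h3 : (Real.exp (-(1/(r:ℝ))))^r = Real.exp (-(1/(r:ℝ)) * r) := by
        rw [← Real.exp_nat_mul]; ring_nf
      have h4 : -(1/(r:ℝ)) * r = -1 := by field_simp
      rw [h3, h4, Real.exp_neg] at h2
      simpa [one_div] using h2
    nlinarith [hfin, mul_le_mul_of_nonneg_right hexp hT0]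
end
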